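/- Let H : E → ℝ be smooth and let ζ₁, ζ₂ be smooth vector fields on E with L_{ζ₁} α_H = 0, L_{ζ₂} α_H = 0, and [ζ₁, ζ₂] = 0. Set J₂(x) = α_H(x)(ζ₂(x)). Then ζ₁(J₂) = 0, i.e., dJ₂(x)(ζ₁(x)) = 0 for all x ∈ E. -/

import Mathlib

noncomputable section
open scoped ContDiff

/-- The extended phase space `E = ℝ × ℝⁿ × ℝⁿ`, with points `x = (t, q, p)`. -/
abbrev EE (n : ℕ) : Type := ℝ × (Fin n → ℝ) × (Fin n → ℝ)

/-- The Poincaré–Cartan 1-form `α_H = p dq − H dt`: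
`α_H(x)(τ̂, ξ̂, η̂) = ∑ i, pᵢ ξ̂ᵢ − H(x) τ̂`. -/
def pcForm {n : ℕ} (H : EE n → ℝ) (x : EE n) : EE n →L[ℝ] ℝ :=
  (∑ i, x.2.2 i • ((ContinuousLinearMap.proj i).comp
      ((ContinuousLinearMap.fst ℝ (Fin n → ℝ) (Fin n → ℝ)).comp
        (ContinuousLinearMap.snd ℝ ℝ ((Fin n → ℝ) × (Fin n → ℝ))))))
    - H x • ContinuousLinearMap.fst ℝ ℝ ((Fin n → ℝ) × (Fin n → ℝ))

/-- The vector field `Z_H(x) = (1, ∂H/∂p(x), −∂H/∂q(x))` of Hamilton's equations. -/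
def ZH {n : ℕ} (H : EE n → ℝ) (x : EE n) : EE n :=
  (1, fun i => fderiv ℝ H x (0, 0, Pi.single i 1),
      fun i => - fderiv ℝ H x (0, Pi.single i 1, 0))

/-- The Lie derivative of a 1-form `α` along a vector field `ζ`:
`(L_ζ α)(x)(v) = (Dα(x)(ζ(x)))(v) + α(x)(Dζ(x)(v))`. -/
def lieDeriv {n : ℕ} (ζ : EE n → EE n) (α : EE n → (EE n →L[ℝ] ℝ)) (x : EE n) :
    EE n →L[ℝ] ℝ :=
  fderiv ℝ α x (ζ x) + (α x).comp (fderiv ℝ ζ x)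

/-- The exterior derivative of a 1-form:
`dα(x)(u,v) = (Dα(x)u)(v) − (Dα(x)v)(u)`. -/
def extDerivEE {n : ℕ} (α : EE n → (EE n →L[ℝ] ℝ)) (x u v : EE n) : ℝ :=
  fderiv ℝ α x u v - fderiv ℝ α x v u

/-- The Lie bracket of vector fields: `[X,Y](x) = DY(x)(X(x)) − DX(x)(Y(x))`. -/
def vbracket {n : ℕ} (X Y : EE n → EE n) (x : EE n) : EE n :=
  fderiv ℝ Y x (X x) - fderiv ℝ X x (Y x)

/-- if `ζ₁, ζ₂` are commuting Noether symmetries, then `ζ₁` preserves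
the Noether integral `J₂ = α_H(ζ₂)`: `dJ₂(ζ₁) ≡ 0`. -/
theorem symmetry_preserves_other_integral {n : ℕ} (hn : 1 ≤ n)
    (H : EE n → ℝ) (hH : ContDiff ℝ ∞ H)
    (ζ₁ ζ₂ : EE n → EE n) (hζ₁ : ContDiff ℝ ∞ ζ₁) (hζ₂ : ContDiff ℝ ∞ ζ₂)
    (hsym₁ : ∀ x, lieDeriv ζ₁ (pcForm H) x = 0)
    (hsym₂ : ∀ x, lieDeriv ζ₂ (pcForm H) x = 0)
    (hcomm : ∀ x, vbracket ζ₁ ζ₂ x = 0) :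
    ∀ x, fderiv ℝ (fun y => pcForm H y (ζ₂ y)) x (ζ₁ x) = 0 := by
  -- differentiability of the Poincaré–Cartan form
  have hα : Differentiable ℝ (pcForm H) := by
    unfold pcForm
    apply Differentiable.sub
    · apply Differentiable.fun_sum
      intro i _
      exact (((ContinuousLinearMap.proj (R := ℝ) (φ := fun _ : Fin n => ℝ) i).comp
        ((ContinuousLinearMap.snd ℝ (Fin n → ℝ) (Fin n → ℝ)).comp
          (ContinuousLinearMap.snd ℝ ℝ ((Fin n → ℝ) × (Fin n → ℝ))))).differentiable.smul_const _)
    · exact (hH.differentiable (by norm_num)).smul_const _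
  intro x
  have h1 : DifferentiableAt ℝ ζ₁ x := (hζ₁.differentiable (by norm_num)) x
  have h2 : DifferentiableAt ℝ ζ₂ x := (hζ₂.differentiable (by norm_num)) x
  have key := ((hα x).hasFDerivAt.clm_apply h2.hasFDerivAt).fderiv
  rw [key]
  simp only [ContinuousLinearMap.add_apply, ContinuousLinearMap.comp_apply,
    ContinuousLinearMap.flip_apply, ContinuousLinearMap.coe_comp', Function.comp_apply]
  have hs := hsym₁ x
  unfold lieDeriv at hs
  have hs' := congrArg (fun (L : EE n →L[ℝ] ℝ) => L (ζ₂ x)) hs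
  simp only [ContinuousLinearMap.add_apply, ContinuousLinearMap.comp_apply,
    ContinuousLinearMap.zero_apply] at hs'
  have hc := hcomm x
  unfold vbracket at hc
  have hc' : fderiv ℝ ζ₂ x (ζ₁ x) = fderiv ℝ ζ₁ x (ζ₂ x) := by
    have := sub_eq_zero.mp hc
    exact this
  rw [hc']
  linarith
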